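/- Let ℰ_ρ = {x ∈ ℝ : x > 0 and |g_ρ(1/√x)| ≤ 1}. Then for every c > 0 the Lebesgue integral ∫_{ℰ_ρ ∩ (0,c)} λ^{-1} dλ is finite, while ∫_{ℰ_ρ ∩ (0,c)} λ^{-2} dλ = ∞. -/

import Mathlib

open MeasureTheory

private lemma aux_inv_le {a b : ℝ} (ha : 0 < a) (h : a ≤ b) : b⁻¹ ≤ a⁻¹ := by
  rw [← one_div, ← one_div]; exact one_div_le_one_div_of_le ha h

private lemma aux_g_abs (ρ : ℝ) (n : ℕ) (t : ℝ) :
    |Real.cos (Real.pi * ((n : ℝ) + t)) - ρ * ((n : ℝ) + t) * Real.sin (Real.pi * ((n : ℝ) + t))|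
      = |Real.cos (Real.pi * t) - ρ * ((n : ℝ) + t) * Real.sin (Real.pi * t)| := by
  have h1 : Real.pi * ((n : ℝ) + t) = Real.pi * t + (n : ℝ) * Real.pi := by ring
  rw [h1, Real.cos_add_nat_mul_pi, Real.sin_add_nat_mul_pi]
  have h2 : (-1 : ℝ) ^ n * Real.cos (Real.pi * t)
      - ρ * ((n : ℝ) + t) * ((-1 : ℝ) ^ n * Real.sin (Real.pi * t))
      = (-1 : ℝ) ^ n * (Real.cos (Real.pi * t) - ρ * ((n : ℝ) + t) * Real.sin (Real.pi * t)) := by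
    ring
  rw [h2, abs_mul, abs_pow, abs_neg, abs_one, one_pow, one_mul]

private lemma aux_trig_mem (ρ m t : ℝ) (hρ : 0 < ρ) (hm : 1 ≤ m) (ht0 : 0 ≤ t) (ht1 : t ≤ 1/2)
    (htm : ρ * (m + t) * (Real.pi * t) ≤ 1) :
    |Real.cos (Real.pi * t) - ρ * (m + t) * Real.sin (Real.pi * t)| ≤ 1 := by
  have hπ := Real.pi_pos
  have h0 : 0 ≤ Real.pi * t := by positivity
  have h1 : Real.pi * t ≤ Real.pi := by nlinarith
  have hsin0 : 0 ≤ Real.sin (Real.pi * t) := Real.sin_nonneg_of_nonneg_of_le_pi h0 h1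
  have hsinle : Real.sin (Real.pi * t) ≤ Real.pi * t := Real.sin_le h0
  have hcos1 : Real.cos (Real.pi * t) ≤ 1 := Real.cos_le_one _
  have hcos0 : 0 ≤ Real.cos (Real.pi * t) := by
    apply Real.cos_nonneg_of_mem_Icc
    constructor <;> nlinarith
  have hmt : 0 < m + t := by linarith
  rw [abs_le]
  constructor
  · nlinarith [mul_le_mul_of_nonneg_left hsinle (mul_pos hρ hmt).le]
  · nlinarith [mul_nonneg (mul_nonneg hρ.le hmt.le) hsin0]

private lemma aux_trig_constrain (ρ m t : ℝ) (hρ : 0 < ρ) (hm : 1 ≤ m) (ht0 : 0 ≤ t)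
    (ht1 : t < 1) (hbig : Real.pi ^ 2 / 8 < ρ * m)
    (h : |Real.cos (Real.pi * t) - ρ * (m + t) * Real.sin (Real.pi * t)| ≤ 1) :
    t ≤ 1/2 ∧ ρ * m * t ≤ 1 := by
  have hπ := Real.pi_pos
  rw [abs_le] at h
  have hlow := h.1
  by_cases hhalf : t ≤ 1/2
  · refine ⟨hhalf, ?_⟩
    have hj : 2 / Real.pi * (Real.pi * t) ≤ Real.sin (Real.pi * t) :=
      Real.mul_le_sin (by positivity) (by nlinarith)
    have hj' : 2 * t ≤ Real.sin (Real.pi * t) := by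
      have he : 2 / Real.pi * (Real.pi * t) = 2 * t := by
        field_simp
      linarith [he ▸ hj]
    have hcos1 : Real.cos (Real.pi * t) ≤ 1 := Real.cos_le_one _
    nlinarith [mul_le_mul_of_nonneg_left hj' (mul_pos hρ (by linarith : (0:ℝ) < m + t)).le,
      mul_nonneg (mul_nonneg hρ.le ht0) ht0]
  · exfalso
    push_neg at hhalf
    obtain ⟨s, hs⟩ : ∃ s : ℝ, s = 1 - t := ⟨_, rfl⟩
    have hs0 : 0 < s := by rw [hs]; linarith
    have hs1 : s < 1/2 := by rw [hs]; linarith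
    have hrw : Real.pi * t = Real.pi - Real.pi * s := by rw [hs]; ring
    rw [hrw, Real.cos_pi_sub, Real.sin_pi_sub] at hlow
    have hj : 2 / Real.pi * (Real.pi * s) ≤ Real.sin (Real.pi * s) :=
      Real.mul_le_sin (by positivity) (by nlinarith)
    have hj' : 2 * s ≤ Real.sin (Real.pi * s) := by
      have he : 2 / Real.pi * (Real.pi * s) = 2 * s := by
        field_simp
      linarith [he ▸ hj]
    have hq : 1 - (Real.pi * s) ^ 2 / 2 ≤ Real.cos (Real.pi * s) :=
      Real.one_sub_sq_div_two_le_cos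
    have hmt : (0:ℝ) < m + t := by linarith
    have hA : ρ * (m + t) * (2 * s) ≤ ρ * (m + t) * Real.sin (Real.pi * s) :=
      mul_le_mul_of_nonneg_left hj' (mul_pos hρ hmt).le
    have hB : ρ * (m + t) * (2 * s) ≤ Real.pi ^ 2 * s ^ 2 / 2 := by nlinarith
    have hD : ρ * m * (2 * s) ≤ ρ * (m + t) * (2 * s) := by
      nlinarith [mul_nonneg (mul_nonneg hρ.le ht0) hs0.le]
    have hEE : Real.pi ^ 2 * s ^ 2 / 2 < Real.pi ^ 2 * s / 4 := by
      nlinarith [mul_pos (mul_pos hπ hπ) (mul_pos hs0 (by linarith : (0:ℝ) < 1/2 - s))]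
    have hF : Real.pi ^ 2 * s / 4 < ρ * m * (2 * s) := by
      nlinarith [mul_pos hs0 (sub_pos.mpr hbig)]
    linarith

private lemma aux_len_upper (ρ m q : ℝ) (hρ : 0 < ρ) (hm : 1 ≤ m) (hq0 : 0 < q)
    (hq2 : q ≤ 1/2) (hρq : ρ * m * q ≤ 1) :
    ((m + q) ^ 2) * ((m ^ 2)⁻¹ - ((m + q) ^ 2)⁻¹) ≤ 12 / (ρ * m ^ 2) := by
  have hm0 : (0:ℝ) < m := by linarith
  have hmq0 : (0:ℝ) < m + q := by linarith
  have hkey : ((m + q) ^ 2) * ((m ^ 2)⁻¹ - ((m + q) ^ 2)⁻¹)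
      = (2 * m * q + q ^ 2) / m ^ 2 := by
    field_simp
    ring
  rw [hkey, div_le_div_iff₀ (by positivity) (by positivity)]
  nlinarith [mul_le_mul_of_nonneg_left hρq (by positivity : (0:ℝ) ≤ 2 * m ^ 2),
    mul_le_mul_of_nonneg_left hρq (mul_nonneg hq0.le hm0.le),
    mul_le_mul_of_nonneg_left hq2 (mul_nonneg hq0.le (mul_nonneg hρ.le hm0.le)),
    mul_pos hq0 hm0, mul_pos hρ hm0, sq_nonneg q, sq_nonneg m]

private lemma aux_len_lower (m a bb : ℝ) (hm : 1 ≤ m) (ha0 : 0 < a) (ha2 : a ≤ 1/2)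
    (hba : bb = a * (m + 1)) :
    bb/4 ≤ ((m ^ 2) ^ 2) * ((m ^ 2)⁻¹ - ((m + a) ^ 2)⁻¹) := by
  have hm0 : (0:ℝ) < m := by linarith
  have hma0 : (0:ℝ) < m + a := by linarith
  have hkey : (m ^ 2)⁻¹ - ((m + a) ^ 2)⁻¹
      = (a * (2 * m + a)) / (m ^ 2 * (m + a) ^ 2) := by
    field_simp
    ring
  have hkey2 : ((m ^ 2) ^ 2) * ((a * (2 * m + a)) / (m ^ 2 * (m + a) ^ 2))
      = (m ^ 2 * (a * (2 * m + a))) / ((m + a) ^ 2) := by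
    field_simp
  rw [hkey, hkey2, hba, div_le_div_iff₀ (by norm_num) (by positivity)]
  nlinarith [mul_pos ha0 hm0, mul_pos ha0 ha0, sq_nonneg (m - 1), sq_nonneg (m + a),
    mul_pos (mul_pos ha0 hm0) hm0, mul_nonneg (mul_nonneg ha0.le ha0.le) hm0.le,
    mul_nonneg (mul_nonneg ha0.le ha0.le) ha0.le,
    mul_nonneg (mul_nonneg ha0.le hm0.le) hm0.le]

theorem stmt_8 (ρ : ℝ) (hρ : 0 < ρ)
    (g : ℝ → ℝ)
    (hg : ∀ μ : ℝ, g μ = Real.cos (Real.pi * μ) - ρ * μ * Real.sin (Real.pi * μ))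
    (E : Set ℝ) (hE : E = {x : ℝ | 0 < x ∧ |g (1 / Real.sqrt x)| ≤ 1}) :
    ∀ c : ℝ, 0 < c →
      (∫⁻ x in E ∩ Set.Ioo 0 c, ENNReal.ofReal x⁻¹) < ⊤ ∧
      (∫⁻ x in E ∩ Set.Ioo 0 c, ENNReal.ofReal ((x ^ 2)⁻¹)) = ⊤ := by
  intro c hc
  have hπ := Real.pi_pos
  constructor
  · -- FINITENESS of ∫ x⁻¹
    obtain ⟨M, hMdef⟩ : ∃ M : ℝ, M = 2 + Real.pi ^ 2 / (8 * ρ) := ⟨_, rfl⟩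
    have hM2 : (2:ℝ) ≤ M := by
      have h : 0 < Real.pi ^ 2 / (8 * ρ) := by positivity
      rw [hMdef]; linarith
    have hMpos : (0:ℝ) < M := by linarith
    obtain ⟨ε, hεdef⟩ : ∃ ε : ℝ, ε = min ((M ^ 2)⁻¹) c := ⟨_, rfl⟩
    have hε : 0 < ε := by
      rw [hεdef]
      exact lt_min (inv_pos.mpr (pow_pos hMpos 2)) hc
    obtain ⟨r, hrdef⟩ : ∃ r : ℕ → ℝ, r = fun n : ℕ => min (1/2) (1/(ρ * (n:ℝ))) := ⟨_, rfl⟩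
    obtain ⟨J, hJdef⟩ : ∃ J : ℕ → Set ℝ,
        J = fun n : ℕ => Set.Icc ((((n:ℝ) + r n) ^ 2)⁻¹) (((n:ℝ) ^ 2)⁻¹) := ⟨_, rfl⟩
    have hrpos : ∀ n : ℕ, 1 ≤ n → 0 < r n := by
      intro n hn
      have hn0 : (0:ℝ) < (n:ℝ) := by exact_mod_cast Nat.pos_of_ne_zero (by omega)
      rw [hrdef]
      exact lt_min (by norm_num) (by positivity)
    have hrhalf : ∀ n : ℕ, r n ≤ 1/2 := by
      intro n; rw [hrdef]; exact min_le_left _ _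
    have hrρ : ∀ n : ℕ, r n ≤ 1/(ρ * (n:ℝ)) := by
      intro n; rw [hrdef]; exact min_le_right _ _
    -- covering
    have hcover : E ∩ Set.Ioo 0 c ⊆ (⋃ k : ℕ, J (k + 2)) ∪ Set.Icc ε c := by
      rintro x ⟨hxE, hx0, hxc⟩
      by_cases hxε : ε ≤ x
      · exact Or.inr ⟨hxε, hxc.le⟩
      · push_neg at hxε
        left
        have hxM : x < (M ^ 2)⁻¹ := lt_of_lt_of_le hxε (hεdef ▸ min_le_left _ _)
        have hsx : 0 < Real.sqrt x := Real.sqrt_pos.mpr hx0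
        obtain ⟨μ, hμdef⟩ : ∃ μ : ℝ, μ = (Real.sqrt x)⁻¹ := ⟨_, rfl⟩
        have hμpos : 0 < μ := by rw [hμdef]; positivity
        have hμs : μ * Real.sqrt x = 1 := by rw [hμdef]; exact inv_mul_cancel₀ hsx.ne'
        have h1 : Real.sqrt x < M⁻¹ := by
          have h := Real.sqrt_lt_sqrt hx0.le hxM
          rwa [Real.sqrt_inv, Real.sqrt_sq hMpos.le] at h
        have h2 : M * Real.sqrt x < 1 := by
          have h := mul_lt_mul_of_pos_left h1 hMpos
          rwa [mul_inv_cancel₀ hMpos.ne'] at h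
        have hμM : M < μ := lt_of_mul_lt_mul_right (by linarith) hsx.le
        have hμ2 : (2:ℝ) < μ := lt_of_le_of_lt hM2 hμM
        obtain ⟨n, hndef⟩ : ∃ n : ℕ, n = ⌊μ⌋₊ := ⟨_, rfl⟩
        have hn2 : 2 ≤ n := by rw [hndef]; exact Nat.le_floor (by exact_mod_cast hμ2.le)
        have hfl : (n:ℝ) ≤ μ := by rw [hndef]; exact Nat.floor_le hμpos.le
        have hfl2 : μ < (n:ℝ) + 1 := by rw [hndef]; exact Nat.lt_floor_add_one μ
        have hm1 : (1:ℝ) ≤ (n:ℝ) := by exact_mod_cast Nat.one_le_iff_ne_zero.mpr (by omega)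
        have hn0 : (0:ℝ) < (n:ℝ) := by linarith
        obtain ⟨t, htdef⟩ : ∃ t : ℝ, t = μ - (n:ℝ) := ⟨_, rfl⟩
        have ht0 : 0 ≤ t := by rw [htdef]; linarith
        have ht1 : t < 1 := by rw [htdef]; linarith
        have hμnt : μ = (n:ℝ) + t := by rw [htdef]; ring
        have hgabs : |g μ| ≤ 1 := by
          rw [hE] at hxE
          have h := hxE.2
          rwa [one_div, ← hμdef] at h
        have habs : |Real.cos (Real.pi * t) - ρ * ((n:ℝ) + t) * Real.sin (Real.pi * t)| ≤ 1 := by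
          rw [← aux_g_abs ρ n t, ← hμnt, ← hg]
          exact hgabs
        have hbig : Real.pi ^ 2 / 8 < ρ * (n:ℝ) := by
          have hMn : M - 1 < (n:ℝ) := by linarith
          have h3 : ρ * (M - 1) < ρ * (n:ℝ) := mul_lt_mul_of_pos_left hMn hρ
          have h4 : ρ * (M - 1) = ρ + Real.pi ^ 2 / 8 := by
            rw [hMdef]; field_simp; ring
          linarith
        obtain ⟨hthalf, hρmt⟩ := aux_trig_constrain ρ (n:ℝ) t hρ hm1 ht0 ht1 hbig habs
        have htr : t ≤ r n := by
          rw [hrdef]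
          refine le_min hthalf ?_
          rw [le_div_iff₀ (by positivity : (0:ℝ) < ρ * (n:ℝ))]
          linarith
        have hxrepr : x = (μ ^ 2)⁻¹ := by
          rw [hμdef, inv_pow, inv_inv, Real.sq_sqrt hx0.le]
        have hrn0 : 0 < r n := hrpos n (by omega)
        have hxJ : x ∈ J n := by
          rw [hJdef]
          constructor
          · rw [hxrepr]
            apply aux_inv_le (pow_pos hμpos 2)
            have h : μ ≤ (n:ℝ) + r n := by linarith
            exact pow_le_pow_left₀ hμpos.le h 2
          · rw [hxrepr]
            apply aux_inv_le (pow_pos hn0 2)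
            exact pow_le_pow_left₀ hn0.le hfl 2
        refine Set.mem_iUnion.mpr ⟨n - 2, ?_⟩
        have h : n - 2 + 2 = n := Nat.sub_add_cancel hn2
        rw [h]
        exact hxJ
    -- per-interval integral bound
    have hJint : ∀ n : ℕ, 1 ≤ n →
        (∫⁻ x in J n, ENNReal.ofReal x⁻¹) ≤ ENNReal.ofReal (12 / (ρ * (n:ℝ) ^ 2)) := by
      intro n hn
      have hm1 : (1:ℝ) ≤ (n:ℝ) := by exact_mod_cast hn
      have hn0 : (0:ℝ) < (n:ℝ) := by linarith
      have hq0 : 0 < r n := hrpos n hn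
      have hq2 : r n ≤ 1/2 := hrhalf n
      have hqρ : r n ≤ 1/(ρ * (n:ℝ)) := hrρ n
      have hnq0 : (0:ℝ) < (n:ℝ) + r n := by linarith
      have hρq : ρ * (n:ℝ) * r n ≤ 1 := by
        have h := (le_div_iff₀ (by positivity : (0:ℝ) < ρ * (n:ℝ))).mp hqρ
        linarith
      calc ∫⁻ x in J n, ENNReal.ofReal x⁻¹
          ≤ ∫⁻ _x in J n, ENNReal.ofReal (((n:ℝ) + r n) ^ 2) := by
            apply setLIntegral_mono measurable_const
            intro x hx
            apply ENNReal.ofReal_le_ofReal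
            rw [hJdef] at hx
            have hx1 : ((((n:ℝ) + r n) ^ 2))⁻¹ ≤ x := hx.1
            have h := aux_inv_le (inv_pos.mpr (pow_pos hnq0 2)) hx1
            rwa [inv_inv] at h
        _ = ENNReal.ofReal (((n:ℝ) + r n) ^ 2) * volume (J n) := setLIntegral_const _ _
        _ = ENNReal.ofReal (((n:ℝ) + r n) ^ 2) *
              ENNReal.ofReal (((n:ℝ) ^ 2)⁻¹ - (((n:ℝ) + r n) ^ 2)⁻¹) := by
            rw [hJdef, Real.volume_Icc]
        _ = ENNReal.ofReal ((((n:ℝ) + r n) ^ 2) *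
              (((n:ℝ) ^ 2)⁻¹ - (((n:ℝ) + r n) ^ 2)⁻¹)) := by
            rw [ENNReal.ofReal_mul (by positivity)]
        _ ≤ ENNReal.ofReal (12 / (ρ * (n:ℝ) ^ 2)) :=
            ENNReal.ofReal_le_ofReal (aux_len_upper ρ (n:ℝ) (r n) hρ hm1 hq0 hq2 hρq)
    -- summability
    have hsum : (∑' k : ℕ, ENNReal.ofReal (12 / (ρ * (((k + 2 : ℕ)):ℝ) ^ 2))) < ⊤ := by
      have hnn : ∀ k : ℕ, 0 ≤ 12 / (ρ * (((k + 2 : ℕ)):ℝ) ^ 2) := by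
        intro k; positivity
      have h0 : Summable (fun n : ℕ => 1 / (n:ℝ) ^ 2) :=
        Real.summable_one_div_nat_pow.mpr one_lt_two
      have h1 : Summable (fun k : ℕ => 1 / (((k + 2 : ℕ)):ℝ) ^ 2) :=
        (summable_nat_add_iff (f := fun n : ℕ => 1 / (n:ℝ) ^ 2) 2).mpr h0
      have h2 : Summable (fun k : ℕ => 12 / (ρ * (((k + 2 : ℕ)):ℝ) ^ 2)) := by
        apply Summable.congr (h1.mul_left (12 / ρ))
        intro k
        have hk0 : (((k + 2 : ℕ)):ℝ) ≠ 0 := by positivity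
        field_simp
      rw [← ENNReal.ofReal_tsum_of_nonneg hnn h2]
      exact ENNReal.ofReal_lt_top
    have hIcc : (∫⁻ x in Set.Icc ε c, ENNReal.ofReal x⁻¹) < ⊤ := by
      have hb : (∫⁻ x in Set.Icc ε c, ENNReal.ofReal x⁻¹)
          ≤ ENNReal.ofReal ε⁻¹ * volume (Set.Icc ε c) := by
        rw [← setLIntegral_const]
        apply setLIntegral_mono measurable_const
        intro x hx
        exact ENNReal.ofReal_le_ofReal (aux_inv_le hε hx.1)
      refine lt_of_le_of_lt hb ?_
      rw [Real.volume_Icc]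
      exact ENNReal.mul_lt_top ENNReal.ofReal_lt_top ENNReal.ofReal_lt_top
    calc (∫⁻ x in E ∩ Set.Ioo 0 c, ENNReal.ofReal x⁻¹)
        ≤ ∫⁻ x in (⋃ k : ℕ, J (k + 2)) ∪ Set.Icc ε c, ENNReal.ofReal x⁻¹ :=
          lintegral_mono_set hcover
      _ ≤ (∫⁻ x in ⋃ k : ℕ, J (k + 2), ENNReal.ofReal x⁻¹)
            + ∫⁻ x in Set.Icc ε c, ENNReal.ofReal x⁻¹ := lintegral_union_le _ _ _
      _ ≤ (∑' k : ℕ, ∫⁻ x in J (k + 2), ENNReal.ofReal x⁻¹)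
            + ∫⁻ x in Set.Icc ε c, ENNReal.ofReal x⁻¹ :=
          add_le_add_left (lintegral_iUnion_le _ _) _
      _ ≤ (∑' k : ℕ, ENNReal.ofReal (12 / (ρ * (((k + 2 : ℕ)):ℝ) ^ 2)))
            + ∫⁻ x in Set.Icc ε c, ENNReal.ofReal x⁻¹ :=
          add_le_add_left (ENNReal.tsum_le_tsum fun k => hJint (k + 2) (by omega)) _
      _ < ⊤ := ENNReal.add_lt_top.mpr ⟨hsum, hIcc⟩
  · -- DIVERGENCE of ∫ (x²)⁻¹
    obtain ⟨b, hbdef⟩ : ∃ b : ℝ, b = min (1/2) (1/(ρ * Real.pi)) := ⟨_, rfl⟩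
    have hb0 : 0 < b := by
      rw [hbdef]; exact lt_min (by norm_num) (by positivity)
    have hb2 : b ≤ 1/2 := by rw [hbdef]; exact min_le_left _ _
    have hbρ : ρ * Real.pi * b ≤ 1 := by
      have h := hbdef ▸ min_le_right (1/2 : ℝ) (1/(ρ * Real.pi))
      have h2 := (le_div_iff₀ (by positivity : (0:ℝ) < ρ * Real.pi)).mp h
      linarith
    obtain ⟨aa, haadef⟩ : ∃ aa : ℕ → ℝ, aa = fun n : ℕ => b / ((n:ℝ) + 1) := ⟨_, rfl⟩
    have haa0 : ∀ n : ℕ, 0 < aa n := by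
      intro n; rw [haadef]; positivity
    have haa2 : ∀ n : ℕ, aa n ≤ 1/2 := by
      intro n; rw [haadef]
      exact le_trans (div_le_self hb0.le (by have h0 : (0:ℝ) ≤ (n:ℝ) := Nat.cast_nonneg n; linarith : (1:ℝ) ≤ (n:ℝ) + 1)) hb2
    -- intervals inside E
    have hsubE : ∀ n : ℕ, 1 ≤ n →
        Set.Icc ((((n:ℝ) + aa n) ^ 2)⁻¹) (((n:ℝ) ^ 2)⁻¹) ⊆ E := by
      intro n hn x hx
      have hm1 : (1:ℝ) ≤ (n:ℝ) := by exact_mod_cast hn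
      have hn0 : (0:ℝ) < (n:ℝ) := by linarith
      have hna0 : (0:ℝ) < (n:ℝ) + aa n := by linarith [haa0 n]
      have hx0 : 0 < x := lt_of_lt_of_le (inv_pos.mpr (pow_pos hna0 2)) hx.1
      have hsx : 0 < Real.sqrt x := Real.sqrt_pos.mpr hx0
      obtain ⟨μ, hμdef⟩ : ∃ μ : ℝ, μ = (Real.sqrt x)⁻¹ := ⟨_, rfl⟩
      have hμpos : 0 < μ := by rw [hμdef]; positivity
      have hμn : (n:ℝ) ≤ μ := by
        have h := Real.sqrt_le_sqrt hx.2
        rw [Real.sqrt_inv, Real.sqrt_sq hn0.le] at h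
        have h2 := aux_inv_le hsx h
        rw [inv_inv] at h2
        rw [hμdef]
        exact h2
      have hμna : μ ≤ (n:ℝ) + aa n := by
        have h := Real.sqrt_le_sqrt hx.1
        rw [Real.sqrt_inv, Real.sqrt_sq hna0.le] at h
        have h2 := aux_inv_le (inv_pos.mpr hna0) h
        rw [inv_inv] at h2
        rw [hμdef]
        exact h2
      obtain ⟨t, htdef⟩ : ∃ t : ℝ, t = μ - (n:ℝ) := ⟨_, rfl⟩
      have ht0 : 0 ≤ t := by rw [htdef]; linarith
      have hta : t ≤ aa n := by rw [htdef]; linarith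
      have ht2 : t ≤ 1/2 := le_trans hta (haa2 n)
      have hμnt : μ = (n:ℝ) + t := by rw [htdef]; ring
      have htm : ρ * ((n:ℝ) + t) * (Real.pi * t) ≤ 1 := by
        have h1 : ρ * ((n:ℝ) + t) * (Real.pi * t) ≤ ρ * ((n:ℝ) + 1) * (Real.pi * aa n) := by
          apply mul_le_mul
          · apply mul_le_mul_of_nonneg_left _ hρ.le
            linarith
          · exact mul_le_mul_of_nonneg_left hta hπ.le
          · positivity
          · positivity
        have h2 : ρ * ((n:ℝ) + 1) * (Real.pi * aa n) = ρ * Real.pi * b := by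
          rw [haadef]
          field_simp
        linarith
      rw [hE]
      refine ⟨hx0, ?_⟩
      rw [one_div, ← hμdef, hg, hμnt, aux_g_abs ρ n t]
      exact aux_trig_mem ρ (n:ℝ) t hρ hm1 ht0 ht2 htm
    -- choice of N
    obtain ⟨N, hNgt⟩ := exists_nat_gt (max 1 (Real.sqrt c)⁻¹)
    have hsc : 0 < Real.sqrt c := Real.sqrt_pos.mpr hc
    have hNR1 : (1:ℝ) < (N:ℝ) := lt_of_le_of_lt (le_max_left _ _) hNgt
    have hN1 : 1 ≤ N := by exact_mod_cast hNR1.le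
    have hNc : ((N:ℝ) ^ 2)⁻¹ ≤ c := by
      have h1 : (Real.sqrt c)⁻¹ < (N:ℝ) := lt_of_le_of_lt (le_max_right _ _) hNgt
      have h2 : ((Real.sqrt c)⁻¹) ^ 2 ≤ (N:ℝ) ^ 2 :=
        pow_le_pow_left₀ (by positivity) h1.le 2
      have h3 : ((Real.sqrt c)⁻¹) ^ 2 = c⁻¹ := by
        rw [inv_pow, Real.sq_sqrt hc.le]
      have h4 := aux_inv_le (by positivity : (0:ℝ) < ((Real.sqrt c)⁻¹) ^ 2) h2
      rw [h3, inv_inv] at h4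
      exact h4
    obtain ⟨s, hsdef⟩ : ∃ s : ℕ → Set ℝ, s = fun k : ℕ =>
        Set.Ioo (((((k + N : ℕ)):ℝ) + aa (k + N)) ^ 2)⁻¹ ((((k + N : ℕ)):ℝ) ^ 2)⁻¹ := ⟨_, rfl⟩
    have hmpos : ∀ k : ℕ, (0:ℝ) < (((k + N : ℕ)):ℝ) := by
      intro k
      have : (0:ℕ) < k + N := by omega
      exact_mod_cast this
    have hm1 : ∀ k : ℕ, (1:ℝ) ≤ (((k + N : ℕ)):ℝ) := by
      intro k
      have : (1:ℕ) ≤ k + N := by omega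
      exact_mod_cast this
    have hsub : ∀ k : ℕ, s k ⊆ E ∩ Set.Ioo 0 c := by
      intro k x hx
      rw [hsdef] at hx
      have hna0 : (0:ℝ) < (((k + N : ℕ)):ℝ) + aa (k + N) := by linarith [haa0 (k + N), hm1 k]
      refine ⟨hsubE (k + N) (by omega) ⟨hx.1.le, hx.2.le⟩, ?_, ?_⟩
      · exact lt_trans (inv_pos.mpr (pow_pos hna0 2)) hx.1
      · have hNle : (N:ℝ) ≤ (((k + N : ℕ)):ℝ) := by
          exact_mod_cast Nat.le_add_left N k
        have h2 : (N:ℝ) ^ 2 ≤ (((k + N : ℕ)):ℝ) ^ 2 :=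
          pow_le_pow_left₀ (by positivity) hNle 2
        have h3 := aux_inv_le (pow_pos (by linarith : (0:ℝ) < (N:ℝ)) 2) h2
        exact lt_of_lt_of_le hx.2 (le_trans h3 hNc)
    have hdisjkey : ∀ i j : ℕ, i < j → Disjoint (s i) (s j) := by
      intro i j hij
      rw [Set.disjoint_left]
      intro x hxi hxj
      rw [hsdef] at hxi hxj
      have hle : ((((i + N : ℕ)):ℝ) + 1) ≤ (((j + N : ℕ)):ℝ) := by
        have h : i + N + 1 ≤ j + N := by omega
        exact_mod_cast h
      have hkey : ((((j + N : ℕ)):ℝ) ^ 2)⁻¹ ≤ (((((i + N : ℕ)):ℝ) + aa (i + N)) ^ 2)⁻¹ := by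
        apply aux_inv_le (pow_pos (by linarith [haa0 (i + N), hm1 i]) 2)
        apply pow_le_pow_left₀ (by linarith [haa0 (i + N), hm1 i])
        have h := haa2 (i + N)
        linarith
      have h1 : (((((i + N : ℕ)):ℝ) + aa (i + N)) ^ 2)⁻¹ < x := hxi.1
      have h2 : x < ((((j + N : ℕ)):ℝ) ^ 2)⁻¹ := hxj.2
      linarith
    have hdisj : Pairwise (Function.onFun Disjoint s) := by
      intro i j hij
      rcases lt_or_gt_of_ne hij with h | h
      · exact hdisjkey i j h
      · exact (hdisjkey j i h).symm
    -- lower bound on each piece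
    have hlower : ∀ k : ℕ,
        ENNReal.ofReal (b/4) ≤ ∫⁻ x in s k, ENNReal.ofReal ((x ^ 2)⁻¹) := by
      intro k
      have hmk1 : (1:ℝ) ≤ (((k + N : ℕ)):ℝ) := hm1 k
      have hmk0 : (0:ℝ) < (((k + N : ℕ)):ℝ) := hmpos k
      have ha0 : 0 < aa (k + N) := haa0 (k + N)
      have ha2 : aa (k + N) ≤ 1/2 := haa2 (k + N)
      have hna0 : (0:ℝ) < (((k + N : ℕ)):ℝ) + aa (k + N) := by linarith
      have hba : b = aa (k + N) * ((((k + N : ℕ)):ℝ) + 1) := by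
        rw [haadef]
        field_simp
      have hmeas2 : Measurable fun x : ℝ => ENNReal.ofReal ((x ^ 2)⁻¹) :=
        ((measurable_id.pow_const 2).inv).ennreal_ofReal
      have hstep : (∫⁻ _x in s k, ENNReal.ofReal (((((k + N : ℕ)):ℝ) ^ 2) ^ 2))
          ≤ ∫⁻ x in s k, ENNReal.ofReal ((x ^ 2)⁻¹) := by
        apply setLIntegral_mono hmeas2
        intro x hx
        apply ENNReal.ofReal_le_ofReal
        rw [hsdef] at hx
        have hx0 : 0 < x := lt_trans (inv_pos.mpr (pow_pos hna0 2)) hx.1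
        have hxle : x ≤ ((((k + N : ℕ)):ℝ) ^ 2)⁻¹ := hx.2.le
        have h1 : x ^ 2 ≤ (((((k + N : ℕ)):ℝ) ^ 2)⁻¹) ^ 2 := pow_le_pow_left₀ hx0.le hxle 2
        have h2 : x ^ 2 ≤ (((((k + N : ℕ)):ℝ) ^ 2) ^ 2)⁻¹ := by rwa [← inv_pow]
        have h3 := aux_inv_le (pow_pos hx0 2) h2
        rwa [inv_inv] at h3
      have hconst : (∫⁻ _x in s k, ENNReal.ofReal (((((k + N : ℕ)):ℝ) ^ 2) ^ 2))
          = ENNReal.ofReal (((((k + N : ℕ)):ℝ) ^ 2) ^ 2) *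
            ENNReal.ofReal (((((k + N : ℕ)):ℝ) ^ 2)⁻¹
              - (((((k + N : ℕ)):ℝ) + aa (k + N)) ^ 2)⁻¹) := by
        rw [setLIntegral_const]
        simp only [hsdef]
        rw [Real.volume_Ioo]
      have hreal : b/4 ≤ (((((k + N : ℕ)):ℝ) ^ 2) ^ 2) *
          (((((k + N : ℕ)):ℝ) ^ 2)⁻¹ - (((((k + N : ℕ)):ℝ) + aa (k + N)) ^ 2)⁻¹) :=
        aux_len_lower (((k + N : ℕ)):ℝ) (aa (k + N)) b hmk1 ha0 ha2 hba
      calc ENNReal.ofReal (b/4)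
          ≤ ENNReal.ofReal ((((((k + N : ℕ)):ℝ) ^ 2) ^ 2) *
              (((((k + N : ℕ)):ℝ) ^ 2)⁻¹ - (((((k + N : ℕ)):ℝ) + aa (k + N)) ^ 2)⁻¹)) :=
            ENNReal.ofReal_le_ofReal hreal
        _ = ENNReal.ofReal (((((k + N : ℕ)):ℝ) ^ 2) ^ 2) *
              ENNReal.ofReal (((((k + N : ℕ)):ℝ) ^ 2)⁻¹
                - (((((k + N : ℕ)):ℝ) + aa (k + N)) ^ 2)⁻¹) :=
            ENNReal.ofReal_mul (by positivity)
        _ = ∫⁻ _x in s k, ENNReal.ofReal (((((k + N : ℕ)):ℝ) ^ 2) ^ 2) := hconst.symm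
        _ ≤ ∫⁻ x in s k, ENNReal.ofReal ((x ^ 2)⁻¹) := hstep
    -- assemble
    have htop : (⊤ : ENNReal) ≤ ∫⁻ x in E ∩ Set.Ioo 0 c, ENNReal.ofReal ((x ^ 2)⁻¹) := by
      calc (⊤ : ENNReal) = ∑' _k : ℕ, ENNReal.ofReal (b/4) :=
            (ENNReal.tsum_const_eq_top_of_ne_zero
              (ne_of_gt (ENNReal.ofReal_pos.mpr (by positivity)))).symm
        _ ≤ ∑' k : ℕ, ∫⁻ x in s k, ENNReal.ofReal ((x ^ 2)⁻¹) :=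
            ENNReal.tsum_le_tsum hlower
        _ = ∫⁻ x in ⋃ k : ℕ, s k, ENNReal.ofReal ((x ^ 2)⁻¹) := by
            refine (lintegral_iUnion (fun k => ?_) hdisj _).symm
            rw [hsdef]
            exact measurableSet_Ioo
        _ ≤ ∫⁻ x in E ∩ Set.Ioo 0 c, ENNReal.ofReal ((x ^ 2)⁻¹) :=
            lintegral_mono_set (Set.iUnion_subset hsub)
    exact top_le_iff.mp htop
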